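/- Let θ(z) = μ‖z‖₁ on ℝ^{m×n} with μ > 0, let X ∈ ℝ^{m×n}, and let y ∈ ∂θ(X) (so y_{ij} = μ·sgn(X_{ij}) when X_{ij} ≠ 0 and |y_{ij}| ≤ μ otherwise). Then the critical cone C = { d : θ'(X; d) = ⟨d, y⟩ } satisfies: its affine hull is aff C = { d : d_{ij} = 0 whenever |y_{ij}| < μ }. -/

import Mathlib

open Filter Topology

/-- The scaled entrywise ℓ₁ norm `θ(Z) = μ Σ_{i,j} |Z_{ij}|` on matrices. -/
def matrixL1 {m n : ℕ} (μ : ℝ) (Z : Matrix (Fin m) (Fin n) ℝ) : ℝ :=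
  μ * ∑ i, ∑ j, |Z i j|

lemma aux_slope_abs (a b : ℝ) :
    Tendsto (fun t : ℝ => (|a + t * b| - |a|) / t) (nhdsWithin 0 (Set.Ioi 0))
      (nhds (if a = 0 then |b| else Real.sign a * b)) := by
  rcases eq_or_ne a 0 with ha | ha
  · simp only [ha, if_pos rfl, zero_add, abs_zero, sub_zero, if_true]
    apply Tendsto.congr' _ tendsto_const_nhds
    filter_upwards [self_mem_nhdsWithin] with t ht
    rw [Set.mem_Ioi] at ht
    rw [abs_mul, abs_of_pos ht, mul_div_assoc]
    field_simp
  · rw [if_neg ha]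
    have h1 : HasDerivAt (fun t : ℝ => a + t * b) b 0 := by
      simpa using ((hasDerivAt_id (0:ℝ)).mul_const b).const_add a
    have h2 : HasDerivAt (fun t : ℝ => |a + t * b|) (Real.sign a * b) 0 := by
      have h0 : a + 0 * b ≠ 0 := by simpa using ha
      have := (hasDerivAt_abs h0).comp 0 h1
      have hs : ((SignType.sign (a + 0 * b) : SignType) : ℝ) * b = Real.sign a * b := by
        rcases ha.lt_or_gt with h | h
        · rw [Real.sign_of_neg h]; simp [h]
        · rw [Real.sign_of_pos h]; simp [h]
      rw [hs] at this
      exact this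
    have h3 := hasDerivAt_iff_tendsto_slope.mp h2
    have h4 : Tendsto (slope (fun t : ℝ => |a + t * b|) 0)
        (nhdsWithin 0 (Set.Ioi 0)) (nhds (Real.sign a * b)) :=
      h3.mono_left (nhdsWithin_mono 0 (fun t ht => ne_of_gt ht))
    apply h4.congr
    intro t
    rw [slope_def_field]
    simp [div_eq_inv_mul]

/-- Affine hull of the critical cone of `θ = μ‖·‖₁`: with `y ∈ ∂θ(X)`, the critical cone
`C = { d : θ'(X;d) = ⟨d,y⟩ }` has affine hull `{ d : d_{ij} = 0 whenever |y_{ij}| < μ }`. -/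
theorem affine_hull_critical_cone_l1 {m n : ℕ} (μ : ℝ) (hμ : 0 < μ)
    (X y : Matrix (Fin m) (Fin n) ℝ)
    (hy₁ : ∀ i j, X i j ≠ 0 → y i j = μ * Real.sign (X i j))
    (hy₂ : ∀ i j, |y i j| ≤ μ) :
    (affineSpan ℝ
        {d : Matrix (Fin m) (Fin n) ℝ |
          Filter.Tendsto (fun t : ℝ => (matrixL1 μ (X + t • d) - matrixL1 μ X) / t)
            (nhdsWithin 0 (Set.Ioi 0)) (nhds (∑ i, ∑ j, d i j * y i j))} :
        Set (Matrix (Fin m) (Fin n) ℝ)) =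
      {d : Matrix (Fin m) (Fin n) ℝ | ∀ i j, |y i j| < μ → d i j = 0} := by
  classical
  -- Step 1: characterize the critical cone
  have hchar : ∀ d : Matrix (Fin m) (Fin n) ℝ,
      (Filter.Tendsto (fun t : ℝ => (matrixL1 μ (X + t • d) - matrixL1 μ X) / t)
        (nhdsWithin 0 (Set.Ioi 0)) (nhds (∑ i, ∑ j, d i j * y i j)))
      ↔ ∀ i j, X i j = 0 → μ * |d i j| = d i j * y i j := by
    intro d
    have hfun : (fun t : ℝ => (matrixL1 μ (X + t • d) - matrixL1 μ X) / t)
        = fun t => μ * ∑ i, ∑ j, (|X i j + t * d i j| - |X i j|) / t := by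
      funext t
      simp only [matrixL1, Matrix.add_apply, Matrix.smul_apply, smul_eq_mul]
      rw [← mul_sub, mul_div_assoc]
      congr 1
      rw [← Finset.sum_sub_distrib, Finset.sum_div]
      exact Finset.sum_congr rfl fun i _ => by
        rw [← Finset.sum_sub_distrib, Finset.sum_div]
    have hT : Filter.Tendsto (fun t : ℝ => (matrixL1 μ (X + t • d) - matrixL1 μ X) / t)
        (nhdsWithin 0 (Set.Ioi 0))
        (nhds (μ * ∑ i, ∑ j,
          (if X i j = 0 then |d i j| else Real.sign (X i j) * d i j))) := by
      rw [hfun]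
      exact (tendsto_finset_sum _ fun i _ =>
        tendsto_finset_sum _ fun j _ => aux_slope_abs _ _).const_mul μ
    have hterm : ∀ i j, d i j * y i j
        ≤ μ * (if X i j = 0 then |d i j| else Real.sign (X i j) * d i j) := by
      intro i j
      by_cases hx : X i j = 0
      · rw [if_pos hx]
        calc d i j * y i j ≤ |d i j * y i j| := le_abs_self _
          _ = |d i j| * |y i j| := abs_mul _ _
          _ ≤ |d i j| * μ := mul_le_mul_of_nonneg_left (hy₂ i j) (abs_nonneg _)
          _ = μ * |d i j| := mul_comm _ _
      · rw [if_neg hx, hy₁ i j hx]; ring_nf; exact le_refl _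
    -- algebraic identity
    have halg : ((∑ i, ∑ j, d i j * y i j)
          = μ * ∑ i, ∑ j, (if X i j = 0 then |d i j| else Real.sign (X i j) * d i j))
        ↔ ∀ i j, X i j = 0 → μ * |d i j| = d i j * y i j := by
      have hmove : (μ * ∑ i, ∑ j, (if X i j = 0 then |d i j| else Real.sign (X i j) * d i j))
          = ∑ i, ∑ j, μ * (if X i j = 0 then |d i j| else Real.sign (X i j) * d i j) := by
        rw [Finset.mul_sum]
        exact Finset.sum_congr rfl fun i _ => Finset.mul_sum _ _ _
      rw [hmove,
        ← Fintype.sum_prod_type' (f := fun i j => d i j * y i j),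
        ← Fintype.sum_prod_type' (f := fun i j =>
            μ * (if X i j = 0 then |d i j| else Real.sign (X i j) * d i j)),
        Finset.sum_eq_sum_iff_of_le (fun p _ => hterm p.1 p.2)]
      constructor
      · intro h i j hx
        have := h (i, j) (Finset.mem_univ _)
        rw [if_pos hx] at this
        exact this.symm
      · intro h p _
        by_cases hx : X p.1 p.2 = 0
        · rw [if_pos hx]
          exact (h p.1 p.2 hx).symm
        · rw [if_neg hx, hy₁ p.1 p.2 hx]; ring
    constructor
    · intro h
      exact halg.mp (tendsto_nhds_unique h hT)
    · intro h
      rw [halg.mpr h]; exact hT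
  have hCeq : {d : Matrix (Fin m) (Fin n) ℝ |
      Filter.Tendsto (fun t : ℝ => (matrixL1 μ (X + t • d) - matrixL1 μ X) / t)
        (nhdsWithin 0 (Set.Ioi 0)) (nhds (∑ i, ∑ j, d i j * y i j))}
      = {d : Matrix (Fin m) (Fin n) ℝ | ∀ i j, X i j = 0 → μ * |d i j| = d i j * y i j} :=
    Set.ext fun d => hchar d
  rw [hCeq]
  set C : Set (Matrix (Fin m) (Fin n) ℝ) :=
    {d | ∀ i j, X i j = 0 → μ * |d i j| = d i j * y i j} with hC
  have h0 : (0 : Matrix (Fin m) (Fin n) ℝ) ∈ C := by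
    intro i j _; simp
  -- affine span of a set containing 0 is the linear span
  have hspan : (affineSpan ℝ C : Set (Matrix (Fin m) (Fin n) ℝ))
      = (Submodule.span ℝ C : Set (Matrix (Fin m) (Fin n) ℝ)) := by
    rw [← affineSpan_insert_zero, Set.insert_eq_of_mem h0]
  rw [hspan]
  -- C ⊆ target
  have hsub : C ⊆ {d : Matrix (Fin m) (Fin n) ℝ | ∀ i j, |y i j| < μ → d i j = 0} := by
    intro d hd i j hylt
    have hx : X i j = 0 := by
      by_contra hx
      have := hy₁ i j hx
      rcases Real.sign_apply_eq_of_ne_zero (X i j) hx with hs | hs <;>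
        rw [this, hs] at hylt <;> simp [abs_of_pos hμ] at hylt
    have heq := hd i j hx
    by_contra hdne
    have habs : 0 < |d i j| := abs_pos.mpr hdne
    have : μ * |d i j| < μ * |d i j| := by
      calc μ * |d i j| = d i j * y i j := heq
        _ ≤ |d i j * y i j| := le_abs_self _
        _ = |d i j| * |y i j| := abs_mul _ _
        _ < |d i j| * μ := by exact mul_lt_mul_of_pos_left hylt habs
        _ = μ * |d i j| := mul_comm _ _
    exact lt_irrefl _ this
  -- target as a submodule
  let S : Submodule ℝ (Matrix (Fin m) (Fin n) ℝ) :=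
    { carrier := {d | ∀ i j, |y i j| < μ → d i j = 0}
      add_mem' := fun {a b} ha hb i j h => by
        simp [Matrix.add_apply, ha i j h, hb i j h]
      zero_mem' := fun i j _ => rfl
      smul_mem' := fun c a ha i j h => by
        simp [Matrix.smul_apply, ha i j h] }
  apply Set.Subset.antisymm
  · intro x hx
    have : Submodule.span ℝ C ≤ S := Submodule.span_le.mpr hsub
    exact this hx
  · -- reverse: every d in the target lies in span C
    intro d hd
    have hd' : ∀ i j, |y i j| < μ → d i j = 0 := hd
    have hrepr := Matrix.matrix_eq_sum_single d
    rw [SetLike.mem_coe, hrepr]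
    apply Submodule.sum_mem
    intro i _
    apply Submodule.sum_mem
    intro j _
    by_cases hylt : |y i j| < μ
    · rw [hd' i j hylt, Matrix.single_zero]
      exact Submodule.zero_mem _
    · -- |y i j| = μ here (or X i j ≠ 0)
      by_cases hx : X i j = 0
      · -- use e = sign (y i j) • stdBasisMatrix
        have hyabs : |y i j| = μ := le_antisymm (hy₂ i j) (not_lt.mp hylt)
        have hyne : y i j ≠ 0 := by
          intro h; rw [h, abs_zero] at hyabs; exact (ne_of_gt hμ) hyabs.symm
        have hmem : Matrix.single i j (Real.sign (y i j)) ∈ C := by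
          intro k l hkl
          by_cases hij : i = k ∧ j = l
          · obtain ⟨rfl, rfl⟩ := hij
            have h1 : Matrix.single i j (Real.sign (y i j)) i j
                = Real.sign (y i j) := by simp [Matrix.single]
            rw [h1]
            rcases Real.sign_apply_eq_of_ne_zero (y i j) hyne with hs | hs
            · rw [hs]
              have : y i j < 0 := by
                rcases lt_trichotomy (y i j) 0 with h | h | h
                · exact h
                · exact absurd h hyne
                · rw [Real.sign_of_pos h] at hs; norm_num at hs
              rw [abs_of_neg this] at hyabs
              norm_num
              linarith
            · rw [hs]
              have : 0 < y i j := by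
                rcases lt_trichotomy (y i j) 0 with h | h | h
                · rw [Real.sign_of_neg h] at hs; norm_num at hs
                · exact absurd h hyne
                · exact h
              rw [abs_of_pos this] at hyabs
              norm_num
              linarith
          · have h1 : Matrix.single i j (Real.sign (y i j)) k l = 0 := by
              simp [Matrix.single, hij]
            rw [h1]; simp
        have hsign2 : Real.sign (y i j) * Real.sign (y i j) = 1 := by
          rcases Real.sign_apply_eq_of_ne_zero (y i j) hyne with hs | hs <;> rw [hs] <;> norm_num
        have : Matrix.single i j (d i j)
            = (d i j * Real.sign (y i j)) • Matrix.single i j (Real.sign (y i j)) := by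
          rw [Matrix.smul_single, smul_eq_mul, mul_assoc, hsign2, mul_one]
        rw [this]
        exact Submodule.smul_mem _ _ (Submodule.subset_span hmem)
      · -- X i j ≠ 0: stdBasisMatrix i j (d i j) ∈ C directly
        have hmem : Matrix.single i j (d i j) ∈ C := by
          intro k l hkl
          by_cases hij : i = k ∧ j = l
          · obtain ⟨rfl, rfl⟩ := hij
            exact absurd hkl hx
          · have h1 : Matrix.single i j (d i j) k l = 0 := by
              simp [Matrix.single, hij]
            rw [h1]; simp
        exact Submodule.subset_span hmem
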